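/- Let V : [0,∞) → [0,∞) and ζ : [0,∞) → [0,∞) be continuously differentiable with ζ′(t) ≥ 0 for all t ≥ 0; let β : [0,∞) → [β̲, β̄] be a function whose values lie in an interval [β̲, β̄] with β̲·β̄ > 0; let ħ be a BL-type Nussbaum function with constant L > max{β̲/β̄, β̄/β̲}; let k > 0, σ₁ > 0, θ ≥ 0 be constants; let ν : [0,∞) → [0,∞) be integrable with ∫₀^∞ ν(τ)dτ ≤ ν̄ < ∞; and let s : [0,∞) → ℝ^m be continuous. If V′(t) ≤ −k‖s(t)‖² + (1/σ₁)(β(t)·ħ(ζ(t)) + 1)·ζ′(t) + θ·ν(t) for all t ≥ 0, then V and ζ are bounded on [0,∞) and ∫₀^∞ ‖s(τ)‖² dτ < ∞. -/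

import Mathlib

open Filter MeasureTheory

/-- The positive part `ħ⁺(ζ) = max {0, ħ(ζ)}`. -/
noncomputable def nussPos (h : ℝ → ℝ) (ζ : ℝ) : ℝ := max 0 (h ζ)

/-- The negative part `ħ⁻(ζ) = max {0, −ħ(ζ)}`. -/
noncomputable def nussNeg (h : ℝ → ℝ) (ζ : ℝ) : ℝ := max 0 (-h ζ)

/-- A continuously differentiable function `ħ : [0,∞) → ℝ` is a *BL-type Nussbaum
function* with constant `L > 1` (limsups in the extended reals). -/
def IsBLNussbaum (h : ℝ → ℝ) (L : ℝ) : Prop :=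
  1 < L ∧ ContDiff ℝ 1 h ∧
  Tendsto (fun ζ => (∫ τ in (0:ℝ)..ζ, nussPos h τ) / ζ) atTop atTop ∧
  Tendsto (fun ζ => (∫ τ in (0:ℝ)..ζ, nussNeg h τ) / ζ) atTop atTop ∧
  (L : EReal) ≤ limsup (fun ζ =>
      (((∫ τ in (0:ℝ)..ζ, nussPos h τ) / (∫ τ in (0:ℝ)..ζ, nussNeg h τ) : ℝ) : EReal)) atTop ∧
  (L : EReal) ≤ limsup (fun ζ =>
      (((∫ τ in (0:ℝ)..ζ, nussNeg h τ) / (∫ τ in (0:ℝ)..ζ, nussPos h τ) : ℝ) : EReal)) atTop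

/-- the stability-analysis step (25)–(26) of Theorem 1.
Let `V, ζ : [0,∞) → [0,∞)` be continuously differentiable with `ζ′ ≥ 0`; let
`β : [0,∞) → [β̲, β̄]` with `β̲·β̄ > 0`; let `ħ` be a BL-type Nussbaum function with
`L > max {β̲/β̄, β̄/β̲}`; let `k, σ₁ > 0`, `θ ≥ 0`; let `ν : [0,∞) → [0,∞)` be
integrable with `∫₀^∞ ν ≤ ν̄ < ∞`; and let `s : [0,∞) → ℝ^m` be continuous.  If
`V′(t) ≤ −k‖s(t)‖² + (1/σ₁)(β(t)ħ(ζ(t)) + 1)ζ′(t) + θν(t)` for all `t ≥ 0`, then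
`V` and `ζ` are bounded on `[0,∞)` and `∫₀^∞ ‖s(τ)‖² dτ < ∞`. -/
theorem bl_nussbaum_integral_lemma {m : ℕ}
    (V ζ β h ν : ℝ → ℝ) (βlo βhi L k σ₁ θ νbar : ℝ)
    (s : ℝ → EuclideanSpace ℝ (Fin m))
    (hV_smooth : ContDiff ℝ 1 V) (hζ_smooth : ContDiff ℝ 1 ζ)
    (hV_nonneg : ∀ t, 0 ≤ t → 0 ≤ V t)
    (hζ_nonneg : ∀ t, 0 ≤ t → 0 ≤ ζ t)
    (hζ_mono : ∀ t, 0 ≤ t → 0 ≤ deriv ζ t)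
    (hβ : ∀ t, 0 ≤ t → β t ∈ Set.Icc βlo βhi)
    (hβprod : 0 < βlo * βhi)
    (hL : max (βlo / βhi) (βhi / βlo) < L)
    (hNuss : IsBLNussbaum h L)
    (hk : 0 < k) (hσ₁ : 0 < σ₁) (hθ : 0 ≤ θ)
    (hν_nonneg : ∀ t, 0 ≤ t → 0 ≤ ν t)
    (hν_int : IntegrableOn ν (Set.Ici 0))
    (hν_bar : ∫ τ in Set.Ici (0:ℝ), ν τ ≤ νbar)
    (hs_cont : Continuous s)
    (hineq : ∀ t, 0 ≤ t →
        deriv V t ≤ -k * ‖s t‖ ^ 2 + (1 / σ₁) * (β t * h (ζ t) + 1) * deriv ζ t + θ * ν t) :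
    (∃ C : ℝ, ∀ t, 0 ≤ t → V t ≤ C) ∧ (∃ C : ℝ, ∀ t, 0 ≤ t → ζ t ≤ C) ∧
    IntegrableOn (fun τ => ‖s τ‖ ^ 2) (Set.Ici 0) := by
  obtain ⟨hL1, hh_smooth, hP_tendsto, hN_tendsto, hlsPN, hlsNP⟩ := hNuss
  have hh_cont : Continuous h := hh_smooth.continuous
  have hβle : βlo ≤ βhi := le_trans (hβ 0 le_rfl).1 (hβ 0 le_rfl).2
  -- notation
  set Hp : ℝ → ℝ := fun z => ∫ τ in (0:ℝ)..z, nussPos h τ with hHp_def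
  set Hn : ℝ → ℝ := fun z => ∫ τ in (0:ℝ)..z, nussNeg h τ with hHn_def
  have hPos_cont : Continuous (nussPos h) := by
    unfold nussPos; exact continuous_const.max hh_cont
  have hNeg_cont : Continuous (nussNeg h) := by
    unfold nussNeg; exact continuous_const.max hh_cont.neg
  set G : ℝ → ℝ := fun u => βhi * nussPos h u - βlo * nussNeg h u with hG_def
  have hG_cont : Continuous G := (continuous_const.mul hPos_cont).sub (continuous_const.mul hNeg_cont)
  have hG1_cont : Continuous (fun u => G u + 1) := hG_cont.add continuous_const
  set Φ : ℝ → ℝ := fun z => ∫ u in (0:ℝ)..z, (G u + 1) with hΦ_def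
  have hΦ_deriv : ∀ z, HasDerivAt Φ (G z + 1) z := fun z =>
    intervalIntegral.integral_hasDerivAt_right (hG1_cont.intervalIntegrable _ _)
      (hG1_cont.aestronglyMeasurable.stronglyMeasurableAtFilter) hG1_cont.continuousAt
  have hΦ_cont : Continuous Φ := by
    have : Differentiable ℝ Φ := fun z => (hΦ_deriv z).differentiableAt
    exact this.continuous
  have hΦ_eq : ∀ z, Φ z = βhi * Hp z - βlo * Hn z + z := by
    intro z
    have h1 : IntervalIntegrable (fun u => βhi * nussPos h u) volume 0 z :=
      (continuous_const.mul hPos_cont).intervalIntegrable _ _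
    have h2 : IntervalIntegrable (fun u => βlo * nussNeg h u) volume 0 z :=
      (continuous_const.mul hNeg_cont).intervalIntegrable _ _
    have := intervalIntegral.integral_add (h1.sub h2)
      (intervalIntegrable_const (c := (1:ℝ)))
    simp only [hΦ_def]
    rw [this, intervalIntegral.integral_sub h1 h2, intervalIntegral.integral_const_mul,
      intervalIntegral.integral_const_mul, integral_one]
    ring
  -- pointwise bound
  have hβh_le : ∀ t, 0 ≤ t → β t * h (ζ t) ≤ G (ζ t) := by
    intro t ht
    simp only [hG_def, nussPos, nussNeg]
    rcases le_or_gt 0 (h (ζ t)) with hx | hx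
    · rw [max_eq_right hx, max_eq_left (by linarith)]
      have := mul_le_mul_of_nonneg_right (hβ t ht).2 hx
      linarith
    · rw [max_eq_left hx.le, max_eq_right (by linarith)]
      have := mul_le_mul_of_nonpos_right (hβ t ht).1 hx.le
      nlinarith
  have hζ_diff : ∀ t, HasDerivAt ζ (deriv ζ t) t := fun t =>
    (hζ_smooth.differentiable one_ne_zero t).hasDerivAt
  have hΨ : ∀ t, HasDerivAt (fun τ => Φ (ζ τ)) ((G (ζ t) + 1) * deriv ζ t) t := fun t =>
    (hΦ_deriv (ζ t)).comp t (hζ_diff t)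
  have hζ'_cont : Continuous (deriv ζ) := hζ_smooth.continuous_deriv le_rfl
  have hV'_cont : Continuous (deriv V) := hV_smooth.continuous_deriv le_rfl
  have hs2_cont : Continuous (fun τ => ‖s τ‖ ^ 2) := (hs_cont.norm).pow 2
  -- the key integral inequality
  have key : ∀ t, 0 ≤ t →
      V t + k * ∫ τ in (0:ℝ)..t, ‖s τ‖ ^ 2 ≤
        V 0 + (1 / σ₁) * (Φ (ζ t) - Φ (ζ 0)) + θ * νbar := by
    intro t ht
    have hν_int_t : IntervalIntegrable ν volume 0 t := by
      rw [intervalIntegrable_iff, Set.uIoc_of_le ht]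
      exact hν_int.mono_set (Set.Ioc_subset_Ioi_self.trans Set.Ioi_subset_Ici_self)
    set f2 : ℝ → ℝ := fun τ => (1 / σ₁) * ((G (ζ τ) + 1) * deriv ζ τ) with hf2_def
    have hf2_cont : Continuous f2 :=
      continuous_const.mul (((hG_cont.comp hζ_smooth.continuous).add continuous_const).mul hζ'_cont)
    set F : ℝ → ℝ := fun τ => -k * ‖s τ‖ ^ 2 + f2 τ + θ * ν τ with hF_def
    have hF_int : IntervalIntegrable F volume 0 t :=
      (((continuous_const.mul hs2_cont).add hf2_cont).intervalIntegrable 0 t).add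
        (hν_int_t.const_mul θ)
    have hVF : ∀ τ ∈ Set.Icc (0:ℝ) t, deriv V τ ≤ F τ := by
      intro τ hτ
      have hτ0 : 0 ≤ τ := hτ.1
      refine le_trans (hineq τ hτ0) ?_
      have h1 : (β τ * h (ζ τ) + 1) * deriv ζ τ ≤ (G (ζ τ) + 1) * deriv ζ τ :=
        mul_le_mul_of_nonneg_right (by linarith [hβh_le τ hτ0]) (hζ_mono τ hτ0)
      have h2 : (1 / σ₁) * ((β τ * h (ζ τ) + 1) * deriv ζ τ) ≤ f2 τ :=
        mul_le_mul_of_nonneg_left h1 (by positivity)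
      simp only [hF_def]
      rw [mul_assoc]
      linarith
    have hint1 : ∫ τ in (0:ℝ)..t, deriv V τ ≤ ∫ τ in (0:ℝ)..t, F τ :=
      intervalIntegral.integral_mono_on ht (hV'_cont.intervalIntegrable _ _) hF_int hVF
    have hVt : ∫ τ in (0:ℝ)..t, deriv V τ = V t - V 0 :=
      intervalIntegral.integral_deriv_eq_sub
        (fun x _ => hV_smooth.differentiable one_ne_zero x) (hV'_cont.intervalIntegrable _ _)
    have hf2int : ∫ τ in (0:ℝ)..t, f2 τ = (1 / σ₁) * (Φ (ζ t) - Φ (ζ 0)) := by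
      rw [hf2_def]
      rw [intervalIntegral.integral_const_mul]
      congr 1
      exact intervalIntegral.integral_eq_sub_of_hasDerivAt (fun τ _ => hΨ τ)
        ((((hG_cont.comp hζ_smooth.continuous).add continuous_const).mul
          hζ'_cont).intervalIntegrable _ _)
    have hFsplit : ∫ τ in (0:ℝ)..t, F τ =
        (∫ τ in (0:ℝ)..t, -k * ‖s τ‖ ^ 2) + (∫ τ in (0:ℝ)..t, f2 τ)
          + θ * ∫ τ in (0:ℝ)..t, ν τ := by
      rw [hF_def]
      beta_reduce
      rw [intervalIntegral.integral_add (f := fun τ => -k * ‖s τ‖ ^ 2 + f2 τ) (g := fun τ => θ * ν τ)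
        (((continuous_const.mul hs2_cont).add hf2_cont).intervalIntegrable 0 t)
        (hν_int_t.const_mul θ),
        intervalIntegral.integral_add (f := fun τ => -k * ‖s τ‖ ^ 2) (g := f2)
          ((continuous_const.mul hs2_cont).intervalIntegrable 0 t)
          (hf2_cont.intervalIntegrable 0 t),
        intervalIntegral.integral_const_mul, intervalIntegral.integral_const_mul,
        intervalIntegral.integral_const_mul]
    have hνle : ∫ τ in (0:ℝ)..t, ν τ ≤ νbar := by
      refine le_trans ?_ hν_bar
      rw [intervalIntegral.integral_of_le ht]
      apply setIntegral_mono_set hν_int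
      · exact (ae_restrict_iff' measurableSet_Ici).mpr (ae_of_all _ hν_nonneg)
      · exact HasSubset.Subset.eventuallyLE (Set.Ioc_subset_Ioi_self.trans Set.Ioi_subset_Ici_self)
    have hsneg : ∫ τ in (0:ℝ)..t, -k * ‖s τ‖ ^ 2 = -(k * ∫ τ in (0:ℝ)..t, ‖s τ‖ ^ 2) := by
      rw [intervalIntegral.integral_const_mul]; ring
    have hθν : θ * ∫ τ in (0:ℝ)..t, ν τ ≤ θ * νbar := mul_le_mul_of_nonneg_left hνle hθ
    rw [hVt] at hint1
    rw [hFsplit, hsneg, hf2int] at hint1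
    linarith
  -- ζ is monotone on [0,∞)
  have hζ_monoOn : MonotoneOn ζ (Set.Ici 0) := by
    apply monotoneOn_of_deriv_nonneg (convex_Ici 0) hζ_smooth.continuous.continuousOn
    · intro x _; exact (hζ_smooth.differentiable one_ne_zero x).differentiableWithinAt
    · intro x hx; rw [interior_Ici] at hx; exact hζ_mono x hx.le
  -- lower bound on Φ on the range of ζ
  set D : ℝ := Φ (ζ 0) - σ₁ * (V 0 + θ * νbar) with hD_def
  have hΦ_lb : ∀ t, 0 ≤ t → D ≤ Φ (ζ t) := by
    intro t ht
    have h1 := key t ht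
    have h2 : 0 ≤ V t := hV_nonneg t ht
    have h3 : 0 ≤ ∫ τ in (0:ℝ)..t, ‖s τ‖ ^ 2 :=
      intervalIntegral.integral_nonneg ht (fun x _ => by positivity)
    have h4 : 0 ≤ k * ∫ τ in (0:ℝ)..t, ‖s τ‖ ^ 2 := mul_nonneg hk.le h3
    have h6 : -(V 0 + θ * νbar) ≤ (1 / σ₁) * (Φ (ζ t) - Φ (ζ 0)) := by linarith
    have h7 := mul_le_mul_of_nonneg_left h6 hσ₁.le
    have h8 : σ₁ * ((1 / σ₁) * (Φ (ζ t) - Φ (ζ 0))) = Φ (ζ t) - Φ (ζ 0) := by field_simp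
    have h9 : σ₁ * -(V 0 + θ * νbar) = -(σ₁ * (V 0 + θ * νbar)) := by ring
    simp only [hD_def]
    linarith
  -- main claim: ζ is bounded
  have hζ_bdd : ∃ Z : ℝ, ∀ t, 0 ≤ t → ζ t ≤ Z := by
    by_contra hcon
    push_neg at hcon
    -- ζ attains every value ≥ ζ 0
    have hsurj : ∀ z, ζ 0 ≤ z → ∃ t, 0 ≤ t ∧ ζ t = z := by
      intro z hz
      obtain ⟨T, hT0, hTz⟩ := hcon z
      have hmem : z ∈ Set.Icc (ζ 0) (ζ T) := ⟨hz, hTz.le⟩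
      have := intermediate_value_Icc hT0 hζ_smooth.continuous.continuousOn hmem
      obtain ⟨t, ht, htz⟩ := this
      exact ⟨t, ht.1, htz⟩
    have hΦ_lb' : ∀ z, ζ 0 ≤ z → D ≤ Φ z := by
      intro z hz
      obtain ⟨t, ht, rfl⟩ := hsurj z hz
      exact hΦ_lb t ht
    set M : ℝ := max (βlo / βhi) (βhi / βlo) with hM_def
    set Lm : ℝ := (M + L) / 2 with hLm_def
    have hML : M < Lm := by simp only [hLm_def]; linarith
    have hLmL : Lm < L := by simp only [hLm_def]; linarith
    have freq_aux : ∀ (u : ℝ → ℝ), (L : EReal) ≤ limsup (fun z => ((u z : ℝ) : EReal)) atTop →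
        ∃ᶠ z in atTop, Lm < u z := by
      intro u hu
      have hb : (Lm : EReal) < (L : EReal) := by exact_mod_cast hLmL
      have := frequently_lt_of_lt_limsup (u := fun z => ((u z : ℝ) : EReal)) (f := atTop)
        (by isBoundedDefault) (lt_of_lt_of_le hb hu)
      exact this.mono (fun z hz => by simpa using EReal.coe_lt_coe_iff.mp hz)
    rcases mul_pos_iff.mp hβprod with ⟨hlo, hhi⟩ | ⟨hlo, hhi⟩
    · -- both positive
      set c : ℝ := βlo * Lm - βhi with hc_def
      have hc : 0 < c := by
        have : βhi / βlo < Lm := lt_of_le_of_lt (le_max_right _ _) hML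
        rw [div_lt_iff₀ hlo] at this
        simp only [hc_def]; nlinarith
      have hfreq : ∃ᶠ z in atTop, Lm < Hn z / Hp z := freq_aux _ hlsNP
      have hev : ∀ᶠ z in atTop, (2 / c) * z ≤ Hp z ∧ 0 < z ∧ ζ 0 ≤ z ∧ -D < z := by
        have h1 : ∀ᶠ z in atTop, 2 / c ≤ Hp z / z := hP_tendsto.eventually_ge_atTop _
        filter_upwards [h1, eventually_gt_atTop 0, eventually_ge_atTop (ζ 0),
          eventually_gt_atTop (-D)] with z hz1 hz2 hz3 hz4
        refine ⟨?_, hz2, hz3, hz4⟩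
        rw [le_div_iff₀ hz2] at hz1
        linarith
      obtain ⟨z, hzf, hz1, hz2, hz3, hz4⟩ := (hfreq.and_eventually hev).exists
      have hHp_pos : 0 < Hp z := by
        have : 0 < (2 / c) * z := by positivity
        linarith
      have hHn_gt : Lm * Hp z < Hn z := by
        rw [lt_div_iff₀ hHp_pos] at hzf; linarith
      have hcHp : 2 * z ≤ c * Hp z := by
        have := mul_le_mul_of_nonneg_left hz1 hc.le
        calc 2 * z = c * ((2 / c) * z) := by field_simp
        _ ≤ c * Hp z := this
      have hc_eq : c * Hp z = βlo * (Lm * Hp z) - βhi * Hp z := by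
        simp only [hc_def]; ring
      have hβloHn : βlo * (Lm * Hp z) ≤ βlo * Hn z :=
        mul_le_mul_of_nonneg_left hHn_gt.le hlo.le
      have hΦz := hΦ_eq z
      have hlb := hΦ_lb' z hz3
      linarith
    · -- both negative
      set c : ℝ := βlo - βhi * Lm with hc_def
      have hc : 0 < c := by
        have : βlo / βhi < Lm := lt_of_le_of_lt (le_max_left _ _) hML
        rw [div_lt_iff_of_neg hhi] at this
        simp only [hc_def]; nlinarith
      have hfreq : ∃ᶠ z in atTop, Lm < Hp z / Hn z := freq_aux _ hlsPN
      have hev : ∀ᶠ z in atTop, (2 / c) * z ≤ Hn z ∧ 0 < z ∧ ζ 0 ≤ z ∧ -D < z := by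
        have h1 : ∀ᶠ z in atTop, 2 / c ≤ Hn z / z := hN_tendsto.eventually_ge_atTop _
        filter_upwards [h1, eventually_gt_atTop 0, eventually_ge_atTop (ζ 0),
          eventually_gt_atTop (-D)] with z hz1 hz2 hz3 hz4
        refine ⟨?_, hz2, hz3, hz4⟩
        rw [le_div_iff₀ hz2] at hz1
        linarith
      obtain ⟨z, hzf, hz1, hz2, hz3, hz4⟩ := (hfreq.and_eventually hev).exists
      have hHn_pos : 0 < Hn z := by
        have : 0 < (2 / c) * z := by positivity
        linarith
      have hHp_gt : Lm * Hn z < Hp z := by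
        rw [lt_div_iff₀ hHn_pos] at hzf; linarith
      have hcHn : 2 * z ≤ c * Hn z := by
        have := mul_le_mul_of_nonneg_left hz1 hc.le
        calc 2 * z = c * ((2 / c) * z) := by field_simp
        _ ≤ c * Hn z := this
      have hc_eq : c * Hn z = βlo * Hn z - βhi * (Lm * Hn z) := by
        simp only [hc_def]; ring
      have hβhiHp : βhi * Hp z ≤ βhi * (Lm * Hn z) :=
        mul_le_mul_of_nonpos_left hHp_gt.le hhi.le
      have hΦz := hΦ_eq z
      have hlb := hΦ_lb' z hz3
      linarith
  -- now extract the conclusions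
  obtain ⟨Z, hZ⟩ := hζ_bdd
  have hZ' : ζ 0 ≤ max Z (ζ 0) := le_max_right _ _
  have hζ_mem : ∀ t, 0 ≤ t → ζ t ∈ Set.Icc (ζ 0) (max Z (ζ 0)) := by
    intro t ht
    exact ⟨hζ_monoOn (Set.self_mem_Ici) ht ht, le_trans (hZ t ht) (le_max_left _ _)⟩
  obtain ⟨zB, _, hzB⟩ := (isCompact_Icc (a := ζ 0) (b := max Z (ζ 0))).exists_isMaxOn
    ⟨ζ 0, Set.left_mem_Icc.mpr hZ'⟩ hΦ_cont.continuousOn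
  set CV : ℝ := V 0 + (1 / σ₁) * (Φ zB - Φ (ζ 0)) + θ * νbar with hCV_def
  have hVC : ∀ t, 0 ≤ t → V t + k * ∫ τ in (0:ℝ)..t, ‖s τ‖ ^ 2 ≤ CV := by
    intro t ht
    have h1 := key t ht
    have h2 : Φ (ζ t) ≤ Φ zB := hzB (hζ_mem t ht)
    have h3 : (1 / σ₁) * (Φ (ζ t) - Φ (ζ 0)) ≤ (1 / σ₁) * (Φ zB - Φ (ζ 0)) :=
      mul_le_mul_of_nonneg_left (by linarith) (by positivity)
    simp only [hCV_def]; linarith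
  refine ⟨⟨CV, fun t ht => ?_⟩, ⟨max Z (ζ 0), fun t ht => (hζ_mem t ht).2⟩, ?_⟩
  · have h1 := hVC t ht
    have h3 : 0 ≤ ∫ τ in (0:ℝ)..t, ‖s τ‖ ^ 2 :=
      intervalIntegral.integral_nonneg ht (fun x _ => by positivity)
    nlinarith
  · -- integrability of ‖s‖²
    rw [integrableOn_Ici_iff_integrableOn_Ioi]
    apply integrableOn_Ioi_of_intervalIntegral_norm_bounded (CV / k) 0
      (f := fun τ => ‖s τ‖ ^ 2) (b := fun n : ℕ => (n : ℝ)) (l := atTop)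
      (fun n => hs2_cont.integrableOn_Ioc) tendsto_natCast_atTop_atTop
    apply Filter.Eventually.of_forall
    intro n
    have hn : (0:ℝ) ≤ n := Nat.cast_nonneg n
    have heq : ∫ x in (0:ℝ)..(n:ℝ), ‖‖s x‖ ^ 2‖ = ∫ x in (0:ℝ)..(n:ℝ), ‖s x‖ ^ 2 := by
      apply intervalIntegral.integral_congr
      intro x _
      exact Real.norm_of_nonneg (by positivity)
    rw [heq, le_div_iff₀ hk]
    nlinarith [hVC (n:ℝ) hn, hV_nonneg (n:ℝ) hn]
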